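/- For all z ∈ [0,1) and all real x: M_0((x+z)²/2) + M_0((x−z)²/2) ≥ 2√(1−z²)·M_0(x²/(2(1−z²))). -/

import Mathlib

open Real

noncomputable def erfi (x : ℝ) : ℝ := (2 / Real.sqrt π) * ∫ z in (0:ℝ)..x, Real.exp (z ^ 2)

noncomputable def M0 (u : ℝ) : ℝ := Real.exp u - Real.sqrt (π * u) * erfi (Real.sqrt u)

noncomputable def II (x : ℝ) : ℝ := ∫ s in (0:ℝ)..x, Real.exp (s ^ 2 / 2)

noncomputable def FF (v : ℝ) : ℝ := Real.exp (v ^ 2 / 2) - v * II v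

lemma contExp : Continuous fun s : ℝ => Real.exp (s ^ 2 / 2) := by
  continuity

lemma II_hasDeriv (x : ℝ) : HasDerivAt II (Real.exp (x ^ 2 / 2)) x := by
  exact intervalIntegral.integral_hasDerivAt_right
    (contExp.intervalIntegrable _ _) (contExp.stronglyMeasurableAtFilter _ _)
    contExp.continuousAt

lemma II_cont : Continuous II := by
  have : Differentiable ℝ II := fun x => (II_hasDeriv x).differentiableAt
  exact this.continuous

lemma FF_hasDeriv (v : ℝ) : HasDerivAt FF (-(II v)) v := by
  have h1 : HasDerivAt (fun v : ℝ => Real.exp (v ^ 2 / 2)) (v * Real.exp (v ^ 2 / 2)) v := by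
    have hp : HasDerivAt (fun v : ℝ => v ^ 2 / 2) v v := by
      simpa using ((hasDerivAt_pow 2 v).div_const 2)
    simpa [mul_comm, Function.comp_def] using (Real.hasDerivAt_exp (v ^ 2 / 2)).comp v hp
  have h2 : HasDerivAt (fun v : ℝ => v * II v)
      (1 * II v + v * Real.exp (v ^ 2 / 2)) v :=
    (hasDerivAt_id v).mul (II_hasDeriv v)
  have := h1.sub h2
  exact this.congr_deriv (by ring)

lemma FF_cont : Continuous FF := by
  have : Differentiable ℝ FF := fun x => (FF_hasDeriv x).differentiableAt
  exact this.continuous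

lemma II_neg (v : ℝ) : II (-v) = -II v := by
  unfold II
  calc (∫ s in (0:ℝ)..(-v), Real.exp (s ^ 2 / 2))
      = ∫ s in (0:ℝ)..(-v), Real.exp ((-s) ^ 2 / 2) := by simp only [neg_sq]
    _ = ∫ s in (-(-v))..(-(0:ℝ)), Real.exp (s ^ 2 / 2) :=
        intervalIntegral.integral_comp_neg (fun s => Real.exp (s ^ 2 / 2))
    _ = -∫ s in (0:ℝ)..v, Real.exp (s ^ 2 / 2) := by
        rw [neg_neg, neg_zero, intervalIntegral.integral_symm]

lemma FF_even (v : ℝ) : FF (-v) = FF v := by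
  unfold FF
  rw [II_neg]
  ring_nf

lemma M0_eq_nonneg (v : ℝ) (hv : 0 ≤ v) : M0 (v ^ 2 / 2) = FF v := by
  have h2 : (0:ℝ) < Real.sqrt 2 := Real.sqrt_pos.2 (by norm_num)
  have hsq : Real.sqrt (v ^ 2 / 2) = v / Real.sqrt 2 := by
    rw [show v ^ 2 / 2 = (v / Real.sqrt 2) ^ 2 by
      rw [div_pow, Real.sq_sqrt (by norm_num : (2:ℝ) ≥ 0)]]
    exact Real.sqrt_sq (by positivity)
  have hπ : (0:ℝ) < Real.sqrt π := Real.sqrt_pos.2 Real.pi_pos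
  have hII : II v = Real.sqrt 2 * ∫ z in (0:ℝ)..v / Real.sqrt 2, Real.exp (z ^ 2) := by
    have key := intervalIntegral.integral_comp_div (a := (0:ℝ)) (b := v)
      (f := fun z => Real.exp (z ^ 2)) (ne_of_gt h2)
    have e1 : II v = ∫ s in (0:ℝ)..v, Real.exp ((s / Real.sqrt 2) ^ 2) := by
      unfold II
      congr 1
      funext s
      rw [div_pow, Real.sq_sqrt (by norm_num : (0:ℝ) ≤ 2)]
    rw [e1]
    simpa [smul_eq_mul] using key
  unfold M0 erfi
  rw [hsq]
  rw [show π * (v ^ 2 / 2) = (Real.sqrt π * (v / Real.sqrt 2)) ^ 2 * 1 by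
    rw [mul_pow, Real.sq_sqrt Real.pi_pos.le, div_pow,
      Real.sq_sqrt (by norm_num : (2:ℝ) ≥ 0)]; ring]
  rw [mul_one, Real.sqrt_sq (by positivity)]
  unfold FF
  rw [hII]
  have h22 : Real.sqrt 2 * Real.sqrt 2 = 2 := Real.mul_self_sqrt (by norm_num)
  field_simp
  linear_combination v *
    (∫ z in (0:ℝ)..v / Real.sqrt 2, Real.exp (z ^ 2)) * h22

lemma M0_eq (v : ℝ) : M0 (v ^ 2 / 2) = FF v := by
  rcases le_or_gt 0 v with hv | hv
  · exact M0_eq_nonneg v hv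
  · have := M0_eq_nonneg (-v) (by linarith)
    rw [FF_even] at this
    simpa [neg_pow] using this

/-- key scalar inequality -/
lemma sinh_le (u : ℝ) (hu : 0 ≤ u) : Real.sinh u ≤ u * Real.exp (u ^ 2 / 2) := by
  set p : ℝ → ℝ := fun u => u * Real.exp (u ^ 2 / 2) - Real.sinh u with hp
  have hderiv : ∀ t : ℝ, HasDerivAt p
      (Real.exp (t ^ 2 / 2) + t * (t * Real.exp (t ^ 2 / 2)) - Real.cosh t) t := by
    intro t
    have hexp : HasDerivAt (fun t : ℝ => Real.exp (t ^ 2 / 2))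
        (t * Real.exp (t ^ 2 / 2)) t := by
      have hq : HasDerivAt (fun t : ℝ => t ^ 2 / 2) t t := by
        simpa using ((hasDerivAt_pow 2 t).div_const 2)
      simpa [mul_comm, Function.comp_def] using (Real.hasDerivAt_exp (t ^ 2 / 2)).comp t hq
    have h1 : HasDerivAt (fun t : ℝ => t * Real.exp (t ^ 2 / 2))
        (1 * Real.exp (t ^ 2 / 2) + t * (t * Real.exp (t ^ 2 / 2))) t :=
      (hasDerivAt_id t).mul hexp
    have := h1.sub (Real.hasDerivAt_sinh t)
    simp only [one_mul] at this
    exact this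
  have hmono : MonotoneOn p (Set.Ici (0:ℝ)) := by
    apply monotoneOn_of_deriv_nonneg (convex_Ici 0)
    · exact (Continuous.continuousOn (by
        have : Differentiable ℝ p := fun t => (hderiv t).differentiableAt
        exact this.continuous))
    · intro t _
      exact ((hderiv t).differentiableAt).differentiableWithinAt
    · intro t ht
      rw [(hderiv t).deriv]
      have h1 : Real.cosh t ≤ Real.exp (t ^ 2 / 2) := Real.cosh_le_exp_half_sq t
      nlinarith [Real.exp_pos (t ^ 2 / 2), sq_nonneg t]
  have h0 : p 0 ≤ p u := hmono (Set.self_mem_Ici) hu hu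
  simp only [hp] at h0
  simp only [Real.sinh_zero, zero_mul, sub_zero] at h0
  linarith


lemma sqrt_le_exp (t : ℝ) : Real.sqrt (1 - t ^ 2) ≤ Real.exp (-(t ^ 2) / 2) := by
  have h1 : (1:ℝ) - t ^ 2 ≤ Real.exp (-(t ^ 2)) := by
    have := Real.add_one_le_exp (-(t ^ 2))
    linarith
  have h2 : Real.exp (-(t ^ 2)) = Real.exp (-(t ^ 2) / 2) ^ 2 := by
    rw [show Real.exp (-(t ^ 2) / 2) ^ 2
        = Real.exp (-(t ^ 2) / 2) * Real.exp (-(t ^ 2) / 2) from sq _, ← Real.exp_add]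
    congr 1; ring
  calc Real.sqrt (1 - t ^ 2) ≤ Real.sqrt (Real.exp (-(t ^ 2))) := Real.sqrt_le_sqrt h1
    _ = Real.exp (-(t ^ 2) / 2) := by rw [h2, Real.sqrt_sq (Real.exp_nonneg _)]

lemma key_ineq_nonneg (t x : ℝ) (ht0 : 0 < t) (ht1 : t < 1) (hx : 0 ≤ x) :
    II (x + t) - II (x - t) ≤
      2 * t / Real.sqrt (1 - t ^ 2) * Real.exp (x ^ 2 / (2 * (1 - t ^ 2))) := by
  have hat : (0:ℝ) < 1 - t ^ 2 := by nlinarith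
  set a := Real.sqrt (1 - t ^ 2) with hadef
  have ha0 : 0 < a := Real.sqrt_pos.2 hat
  have ha2 : a ^ 2 = 1 - t ^ 2 := Real.sq_sqrt hat.le
  have hale : a ≤ Real.exp (-(t ^ 2) / 2) := sqrt_le_exp t
  -- step 1 : difference of II is an interval integral
  have hstep1 : II (x + t) - II (x - t)
      = ∫ s in (x - t)..(x + t), Real.exp (s ^ 2 / 2) := by
    have := intervalIntegral.integral_add_adjacent_intervals
      (μ := MeasureTheory.volume) (a := (0:ℝ)) (b := x - t) (c := x + t)
      (contExp.intervalIntegrable _ _) (contExp.intervalIntegrable _ _)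
    unfold II
    linarith [this]
  -- step 2 : chord bound
  have hstep2 : (∫ s in (x - t)..(x + t), Real.exp (s ^ 2 / 2))
      ≤ ∫ s in (x - t)..(x + t), Real.exp ((t ^ 2 - x ^ 2) / 2) * Real.exp (x * s) := by
    apply intervalIntegral.integral_mono_on (μ := MeasureTheory.volume) (by linarith)
      (contExp.intervalIntegrable _ _)
      (Continuous.intervalIntegrable (μ := MeasureTheory.volume)
        (by continuity : Continuous fun s : ℝ =>
          Real.exp ((t ^ 2 - x ^ 2) / 2) * Real.exp (x * s)) _ _)
    intro s hs
    rw [← Real.exp_add]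
    apply Real.exp_le_exp.2
    have h1 : x - t ≤ s := hs.1
    have h2 : s ≤ x + t := hs.2
    nlinarith [sq_nonneg (s - x)]
  rw [hstep1]
  rcases eq_or_lt_of_le hx with hx0 | hxpos
  · -- x = 0
    subst hx0
    have h1 : (∫ s in (0 - t)..(0 + t), Real.exp (s ^ 2 / 2))
        ≤ ∫ s in (0 - t)..(0 + t), (Real.exp (t ^ 2 / 2) : ℝ) := by
      apply intervalIntegral.integral_mono_on (μ := MeasureTheory.volume) (by linarith)
        (contExp.intervalIntegrable _ _)
        (Continuous.intervalIntegrable (μ := MeasureTheory.volume) continuous_const _ _)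
      intro s hs
      apply Real.exp_le_exp.2
      have h1 := hs.1; have h2 := hs.2
      nlinarith
    have h2 : (∫ _s in (0 - t)..(0 + t), (Real.exp (t ^ 2 / 2) : ℝ))
        = 2 * t * Real.exp (t ^ 2 / 2) := by
      rw [intervalIntegral.integral_const, smul_eq_mul]
      ring
    refine h1.trans ?_
    rw [h2]
    have h4 : Real.exp ((0:ℝ) ^ 2 / (2 * (1 - t ^ 2))) = 1 := by
      norm_num
    rw [h4, mul_one, le_div_iff₀ ha0]
    have h3 : Real.exp (t ^ 2 / 2) * a ≤ 1 := by
      have := mul_le_mul_of_nonneg_left hale (Real.exp_nonneg (t ^ 2 / 2))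
      rwa [← Real.exp_add, show t ^ 2 / 2 + -(t ^ 2) / 2 = 0 by ring, Real.exp_zero] at this
    nlinarith [Real.exp_pos (t ^ 2 / 2)]
  · -- x > 0
    have hx3 : x ≠ 0 := ne_of_gt hxpos
    refine hstep2.trans ?_
    have hev : (∫ s in (x - t)..(x + t), Real.exp ((t ^ 2 - x ^ 2) / 2) * Real.exp (x * s))
        = Real.exp ((t ^ 2 - x ^ 2) / 2)
          * (x⁻¹ * (Real.exp (x * (x + t)) - Real.exp (x * (x - t)))) := by
      rw [intervalIntegral.integral_const_mul]
      congr 1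
      rw [intervalIntegral.integral_comp_mul_left (f := Real.exp) (c := x) hx3,
        integral_exp, smul_eq_mul]
    rw [hev]
    have hdiff : Real.exp (x * (x + t)) - Real.exp (x * (x - t))
        = Real.exp (x ^ 2) * (2 * Real.sinh (x * t)) := by
      rw [Real.sinh_eq, show x * (x + t) = x ^ 2 + x * t by ring,
        show x * (x - t) = x ^ 2 + -(x * t) by ring, Real.exp_add, Real.exp_add]
      ring
    have hsinh : Real.sinh (x * t) ≤ x * t * Real.exp ((x * t) ^ 2 / 2) :=
      sinh_le _ (by positivity)
    set E : ℝ := (t ^ 2 + x ^ 2) / 2 + (x * t) ^ 2 / 2 with hE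
    have heq : Real.exp ((t ^ 2 - x ^ 2) / 2)
          * (x⁻¹ * (Real.exp (x * (x + t)) - Real.exp (x * (x - t))))
        = (2 / x) * (Real.exp ((t ^ 2 + x ^ 2) / 2) * Real.sinh (x * t)) := by
      rw [hdiff, show (t ^ 2 - x ^ 2) / 2 = (t ^ 2 + x ^ 2) / 2 + -(x ^ 2) by ring,
        Real.exp_add]
      have hxx : Real.exp (-(x ^ 2)) * Real.exp (x ^ 2) = 1 := by
        rw [← Real.exp_add]; norm_num
      field_simp
      linear_combination hxx
    rw [heq]
    have hmid : (2 / x) * (Real.exp ((t ^ 2 + x ^ 2) / 2) * Real.sinh (x * t))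
        ≤ 2 * t * Real.exp E := by
      have h5 : Real.exp ((t ^ 2 + x ^ 2) / 2) * Real.sinh (x * t)
          ≤ Real.exp ((t ^ 2 + x ^ 2) / 2) * (x * t * Real.exp ((x * t) ^ 2 / 2)) :=
        mul_le_mul_of_nonneg_left hsinh (Real.exp_nonneg _)
      have h6 : (2 / x) * (Real.exp ((t ^ 2 + x ^ 2) / 2) * (x * t * Real.exp ((x * t) ^ 2 / 2)))
          = 2 * t * Real.exp E := by
        rw [hE, Real.exp_add]
        field_simp
      calc (2 / x) * (Real.exp ((t ^ 2 + x ^ 2) / 2) * Real.sinh (x * t))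
          ≤ (2 / x) * (Real.exp ((t ^ 2 + x ^ 2) / 2) * (x * t * Real.exp ((x * t) ^ 2 / 2))) :=
            mul_le_mul_of_nonneg_left h5 (by positivity)
        _ = 2 * t * Real.exp E := h6
    refine hmid.trans ?_
    rw [div_mul_eq_mul_div, le_div_iff₀ ha0]
    have h7 : Real.exp E * a ≤ Real.exp (E + -(t ^ 2) / 2) := by
      have := mul_le_mul_of_nonneg_left hale (Real.exp_nonneg E)
      rwa [← Real.exp_add] at this
    have h8 : Real.exp (E + -(t ^ 2) / 2) ≤ Real.exp (x ^ 2 / (2 * (1 - t ^ 2))) := by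
      apply Real.exp_le_exp.2
      rw [hE, le_div_iff₀ (by linarith : (0:ℝ) < 2 * (1 - t ^ 2))]
      nlinarith [sq_nonneg (x * t * t)]
    nlinarith [Real.exp_pos E, ht0]

lemma key_ineq (t x : ℝ) (ht0 : 0 < t) (ht1 : t < 1) :
    II (x + t) - II (x - t) ≤
      2 * t / Real.sqrt (1 - t ^ 2) * Real.exp (x ^ 2 / (2 * (1 - t ^ 2))) := by
  rcases le_or_gt 0 x with hx | hx
  · exact key_ineq_nonneg t x ht0 ht1 hx
  · have h := key_ineq_nonneg t (-x) ht0 ht1 (by linarith)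
    have e1 : II (-x + t) = -II (x - t) := by
      rw [show -x + t = -(x - t) by ring, II_neg]
    have e2 : II (-x - t) = -II (x + t) := by
      rw [show -x - t = -(x + t) by ring, II_neg]
    rw [e1, e2, neg_sq] at h
    linarith

lemma G_hasDeriv (x t : ℝ) (ht : 0 < 1 - t ^ 2) :
    HasDerivAt (fun t => FF (x + t) + FF (x - t)
        - 2 * Real.sqrt (1 - t ^ 2) * FF (x / Real.sqrt (1 - t ^ 2)))
      (II (x - t) - II (x + t)
        + 2 * t / Real.sqrt (1 - t ^ 2) * Real.exp (x ^ 2 / (2 * (1 - t ^ 2)))) t := by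
  set a := Real.sqrt (1 - t ^ 2) with hadef
  have ha0 : 0 < a := Real.sqrt_pos.2 ht
  have ha2 : a ^ 2 = 1 - t ^ 2 := Real.sq_sqrt ht.le
  have hA : HasDerivAt (fun t : ℝ => FF (x + t)) (-(II (x + t))) t := by
    have h := (FF_hasDeriv (x + t)).comp t ((hasDerivAt_id t).const_add x)
    simpa [Function.comp_def] using h
  have hB : HasDerivAt (fun t : ℝ => FF (x - t)) (II (x - t)) t := by
    have hi : HasDerivAt (fun t : ℝ => x - t) (-1) t := by
      simpa using (hasDerivAt_id t).const_sub x
    have h := (FF_hasDeriv (x - t)).comp t hi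
    simpa [Function.comp_def] using h
  have hq : HasDerivAt (fun t : ℝ => 1 - t ^ 2) (-(2 * t)) t := by
    have := (hasDerivAt_pow 2 t).const_sub 1
    simpa using this
  have hsq : HasDerivAt (fun t : ℝ => Real.sqrt (1 - t ^ 2)) (-(2 * t) / (2 * a)) t :=
    hq.sqrt (ne_of_gt ht)
  have hw : HasDerivAt (fun t : ℝ => x / Real.sqrt (1 - t ^ 2))
      ((0 * a - x * (-(2 * t) / (2 * a))) / a ^ 2) t :=
    (hasDerivAt_const t x).div hsq (ne_of_gt ha0)
  have hFw : HasDerivAt (fun t : ℝ => FF (x / Real.sqrt (1 - t ^ 2)))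
      (-(II (x / a)) * ((0 * a - x * (-(2 * t) / (2 * a))) / a ^ 2)) t := by
    have h := (FF_hasDeriv (x / a)).comp t hw
    simpa [Function.comp_def] using h
  have hprod := (hsq.mul hFw).const_mul 2
  have htotal := (hA.add hB).sub hprod
  have hfun : (fun t : ℝ => FF (x + t) + FF (x - t)
      - 2 * (Real.sqrt (1 - t ^ 2) * FF (x / Real.sqrt (1 - t ^ 2))))
      = fun t : ℝ => FF (x + t) + FF (x - t)
      - 2 * Real.sqrt (1 - t ^ 2) * FF (x / Real.sqrt (1 - t ^ 2)) := by
    funext s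
    ring
  rw [← hfun]
  refine htotal.congr_deriv ?_
  rw [show FF (x / a) = Real.exp ((x / a) ^ 2 / 2) - (x / a) * II (x / a) from rfl]
  rw [show (x / a) ^ 2 / 2 = x ^ 2 / (2 * (1 - t ^ 2)) by rw [div_pow, ha2, div_div, mul_comm]]
  field_simp
  ring

theorem M0_three_point_ineq (z x : ℝ) (hz0 : 0 ≤ z) (hz1 : z < 1) :
    M0 ((x + z) ^ 2 / 2) + M0 ((x - z) ^ 2 / 2) ≥
      2 * Real.sqrt (1 - z ^ 2) * M0 (x ^ 2 / (2 * (1 - z ^ 2))) := by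
  have h1z : 0 < 1 - z ^ 2 := by nlinarith
  have ha2 : Real.sqrt (1 - z ^ 2) ^ 2 = 1 - z ^ 2 := Real.sq_sqrt h1z.le
  have harg : x ^ 2 / (2 * (1 - z ^ 2)) = (x / Real.sqrt (1 - z ^ 2)) ^ 2 / 2 := by
    rw [div_pow, ha2, div_div, mul_comm]
  rw [ge_iff_le, M0_eq (x + z), M0_eq (x - z), harg, M0_eq (x / Real.sqrt (1 - z ^ 2))]
  rcases eq_or_lt_of_le hz0 with h0 | hzpos
  · subst h0
    norm_num [Real.sqrt_one]
    linarith
  · set G : ℝ → ℝ := fun t => FF (x + t) + FF (x - t)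
      - 2 * Real.sqrt (1 - t ^ 2) * FF (x / Real.sqrt (1 - t ^ 2)) with hGdef
    have hmono : MonotoneOn G (Set.Icc 0 z) := by
      apply monotoneOn_of_deriv_nonneg (convex_Icc 0 z)
      · have hc1 : Continuous fun t : ℝ => FF (x + t) + FF (x - t) := by
          exact (FF_cont.comp (continuous_const.add continuous_id)).add
            (FF_cont.comp (continuous_const.sub continuous_id))
        have hcs : Continuous fun t : ℝ => Real.sqrt (1 - t ^ 2) := by
          exact Real.continuous_sqrt.comp (by continuity)
        have hsne : ∀ t ∈ Set.Icc (0:ℝ) z, Real.sqrt (1 - t ^ 2) ≠ 0 := by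
          intro t ht
          exact ne_of_gt (Real.sqrt_pos.2 (by nlinarith [ht.1, ht.2]))
        have hc2 : ContinuousOn (fun t : ℝ =>
            2 * Real.sqrt (1 - t ^ 2) * FF (x / Real.sqrt (1 - t ^ 2))) (Set.Icc 0 z) := by
          apply ContinuousOn.mul
          · exact (continuous_const.mul hcs).continuousOn
          · exact FF_cont.comp_continuousOn
              (ContinuousOn.div continuousOn_const hcs.continuousOn hsne)
        exact (hc1.continuousOn).sub hc2
      · intro t ht
        rw [interior_Icc] at ht
        exact ((G_hasDeriv x t (by nlinarith [ht.1, ht.2])).differentiableAt).differentiableWithinAt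
      · intro t ht
        rw [interior_Icc] at ht
        have h1t : 0 < 1 - t ^ 2 := by nlinarith [ht.1, ht.2]
        rw [hGdef, (G_hasDeriv x t h1t).deriv]
        have hk := key_ineq t x ht.1 (by nlinarith [ht.2])
        linarith
    have h0z : G 0 ≤ G z := hmono ⟨le_refl 0, hzpos.le⟩ ⟨hzpos.le, le_refl z⟩ hzpos.le
    have hG0 : G 0 = 0 := by
      rw [hGdef]
      norm_num [Real.sqrt_one]
      ring
    have hGz : G z = FF (x + z) + FF (x - z)
        - 2 * Real.sqrt (1 - z ^ 2) * FF (x / Real.sqrt (1 - z ^ 2)) := rfl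
    rw [hG0, hGz] at h0z
    linarith
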